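/- Let k' be a flat commutative k-algebra, and set B = A ⊗_k k' with involution η = θ ⊗ id. Then there is a canonical isomorphism of k'[t]-algebras 𝐀 ⊗_k k' ≅ 𝐁, where 𝐀 and 𝐁 are the contraction algebras of (A, θ) over k and (B, η) over k' respectively. -/

import Mathlib

open LaurentPolynomial

/-- The contraction algebra `𝐀`: the `k[t]`-subalgebra of `A[√t^{±1}]`
(with `t = (√t)²`) generated by `A^θ` and `(1/√t)·A^{-θ}`. -/
noncomputable def contraction (k A : Type*) [CommRing k] [CommRing A] [Algebra k A]
    (θ : A →ₐ[k] A) : Subalgebra k (LaurentPolynomial A) :=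
  Algebra.adjoin k (insert (T 2)
    ({f | ∃ a, θ a = a ∧ f = C a} ∪ {f | ∃ a, θ a = -a ∧ f = C a * T (-1)}))

open TensorProduct

/-!
STATEMENT 19: let `k'` be a flat commutative `k`-algebra and
`B = k' ⊗_k A` with involution `η = id ⊗ θ`.  Then there is a canonical
isomorphism of `k'[t]`-algebras `k' ⊗_k 𝐀 ≅ 𝐁`, induced by the canonical map
`Φ : A[√t^{±1}] → B[√t^{±1}]` (in particular it sends `1 ⊗ x` to `Φ x` for
`x ∈ 𝐀`; compatibility with `t` is then automatic since `Φ (T 2) = T 2`). -/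
set_option synthInstance.maxHeartbeats 1000000 in
set_option maxHeartbeats 1000000 in
theorem contraction_flat_baseChange
    (k k' A : Type*) [CommRing k] [CommRing k'] [CommRing A]
    [Algebra k k'] [Algebra k A] [Module.Flat k k'] [Invertible (2 : k)]
    (θ : A →ₐ[k] A) (hθ : θ.comp θ = AlgHom.id k A)
    (η : (k' ⊗[k] A) →ₐ[k'] (k' ⊗[k] A))
    (hη : ∀ (c : k') (a : A), η (c ⊗ₜ[k] a) = c ⊗ₜ[k] θ a)
    (Φ : LaurentPolynomial A →ₐ[k] LaurentPolynomial (k' ⊗[k] A))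
    (hΦ : ∀ (a : A) (n : ℤ), Φ (C a * T n) = C ((1 : k') ⊗ₜ[k] a) * T n) :
    ∃ e : (k' ⊗[k] ↥(contraction k A θ)) ≃ₐ[k'] ↥(contraction k' (k' ⊗[k] A) η),
      ∀ (x : ↥(contraction k A θ))
        (hx : Φ (x : LaurentPolynomial A) ∈ contraction k' (k' ⊗[k] A) η),
        e ((1 : k') ⊗ₜ[k] x) = ⟨Φ (x : LaurentPolynomial A), hx⟩ := by
  classical
  letI : Invertible (2 : k') := by
    have h := Invertible.map (algebraMap k k') (2 : k)
    rwa [map_ofNat] at h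
  have hθθ : ∀ a : A, θ (θ a) = a := fun a => AlgHom.congr_fun hθ a
  -- `C` commutes with scalars
  have hCs : ∀ (c : k') (b : k' ⊗[k] A),
      c • (C b : LaurentPolynomial (k' ⊗[k] A)) = C (c • b) := by
    intro c b
    have h0 : ∀ y : k' ⊗[k] A, (C y : LaurentPolynomial (k' ⊗[k] A)) = AddMonoidAlgebra.single 0 y := by
      intro y
      simpa using (single_eq_C_mul_T y 0).symm
    rw [h0, h0]
    exact AddMonoidAlgebra.smul_single c 0 b
  -- Φ on generators
  have hΦC : ∀ a : A, Φ (C a) = C ((1:k') ⊗ₜ[k] a) := fun a => by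
    have := hΦ a 0; simpa [T_zero] using this
  have hΦT2 : Φ (T 2) = T 2 := by
    have := hΦ 1 2; simpa [← Algebra.TensorProduct.one_def] using this
  -- Φ maps 𝐀 into 𝐁
  have hmem : ∀ x ∈ contraction k A θ, Φ x ∈ contraction k' (k' ⊗[k] A) η := by
    intro x hx
    have h1 : Φ x ∈ (contraction k A θ).map Φ := Subalgebra.mem_map.2 ⟨x, hx, rfl⟩
    rw [contraction, AlgHom.map_adjoin] at h1
    refine Algebra.adjoin_le
      (S := (contraction k' (k' ⊗[k] A) η).restrictScalars k) ?_ h1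
    rintro y ⟨z, hz, rfl⟩
    show Φ z ∈ contraction k' (k' ⊗[k] A) η
    rcases hz with rfl | ⟨a, ha, rfl⟩ | ⟨a, ha, rfl⟩
    · rw [hΦT2]
      exact Algebra.subset_adjoin (Set.mem_insert _ _)
    · rw [hΦC]
      refine Algebra.subset_adjoin (Set.mem_insert_iff.2 (Or.inr (Or.inl ⟨_, ?_, rfl⟩)))
      rw [hη, ha]
    · rw [hΦ]
      refine Algebra.subset_adjoin (Set.mem_insert_iff.2 (Or.inr (Or.inr ⟨_, ?_, rfl⟩)))
      rw [hη, ha, TensorProduct.tmul_neg]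
  -- the base-changed map
  let j : ↥(contraction k A θ) →ₐ[k] LaurentPolynomial (k' ⊗[k] A) :=
    Φ.comp (contraction k A θ).val
  let g : (k' ⊗[k] ↥(contraction k A θ)) →ₐ[k'] LaurentPolynomial (k' ⊗[k] A) :=
    Algebra.TensorProduct.lift (Algebra.ofId k' _) j (fun _ _ => Commute.all _ _)
  have hg : ∀ (c : k') (x : ↥(contraction k A θ)),
      g (c ⊗ₜ[k] x) = c • Φ (x : LaurentPolynomial A) := by
    intro c x
    show (Algebra.ofId k' _) c * j x = _
    rw [Algebra.ofId_apply, ← Algebra.smul_def]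
    rfl
  -- membership of generators of 𝐀
  have hT2A : (T 2 : LaurentPolynomial A) ∈ contraction k A θ :=
    Algebra.subset_adjoin (Set.mem_insert _ _)
  -- surjectivity
  have key1 : ∀ b : k' ⊗[k] A, (C (b + η b) : LaurentPolynomial (k' ⊗[k] A)) ∈ g.range := by
    intro b
    induction b using TensorProduct.induction_on with
    | zero => simpa using (Subalgebra.zero_mem g.range)
    | tmul c a =>
        have ha : θ (a + θ a) = a + θ a := by
          rw [map_add, hθθ, add_comm]
        have hmemA : (C (a + θ a) : LaurentPolynomial A) ∈ contraction k A θ :=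
          Algebra.subset_adjoin (Set.mem_insert_iff.2 (Or.inr (Or.inl ⟨_, ha, rfl⟩)))
        refine ⟨c ⊗ₜ[k] ⟨C (a + θ a), hmemA⟩, (hg c ⟨C (a + θ a), hmemA⟩).trans ?_⟩
        show c • Φ (C (a + θ a)) = _
        rw [hΦC, hCs, hη, ← TensorProduct.tmul_add, TensorProduct.smul_tmul', smul_eq_mul,
          mul_one]
    | add x y hx hy =>
        have h : (C (x + y + η (x + y)) : LaurentPolynomial (k' ⊗[k] A)) =
            C (x + η x) + C (y + η y) := by
          have e1 : x + y + (η x + η y) = (x + η x) + (y + η y) := by ring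
          rw [map_add η, e1, map_add]
        rw [h]
        exact Subalgebra.add_mem _ hx hy
  have key2 : ∀ b : k' ⊗[k] A,
      (C (b - η b) * T (-1) : LaurentPolynomial (k' ⊗[k] A)) ∈ g.range := by
    intro b
    induction b using TensorProduct.induction_on with
    | zero => simpa using (Subalgebra.zero_mem g.range)
    | tmul c a =>
        have ha : θ (a - θ a) = -(a - θ a) := by
          rw [map_sub, hθθ]; ring
        have hmemA : (C (a - θ a) * T (-1) : LaurentPolynomial A) ∈ contraction k A θ :=
          Algebra.subset_adjoin (Set.mem_insert_iff.2 (Or.inr (Or.inr ⟨_, ha, rfl⟩)))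
        refine ⟨c ⊗ₜ[k] ⟨C (a - θ a) * T (-1), hmemA⟩,
          (hg c ⟨C (a - θ a) * T (-1), hmemA⟩).trans ?_⟩
        show c • Φ (C (a - θ a) * T (-1)) = _
        rw [hΦ, ← smul_mul_assoc, hCs, hη, ← TensorProduct.tmul_sub, TensorProduct.smul_tmul',
          smul_eq_mul, mul_one]
    | add x y hx hy =>
        have h : (C (x + y - η (x + y)) * T (-1) : LaurentPolynomial (k' ⊗[k] A)) =
            C (x - η x) * T (-1) + C (y - η y) * T (-1) := by
          have e1 : x + y - (η x + η y) = (x - η x) + (y - η y) := by ring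
          rw [map_add η, e1, map_add, add_mul]
        rw [h]
        exact Subalgebra.add_mem _ hx hy
  have hsurj : contraction k' (k' ⊗[k] A) η ≤ g.range := by
    rw [contraction]
    apply Algebra.adjoin_le
    rintro y (rfl | ⟨b, hb, rfl⟩ | ⟨b, hb, rfl⟩)
    · refine ⟨1 ⊗ₜ[k] ⟨T 2, hT2A⟩, (hg 1 ⟨T 2, hT2A⟩).trans ?_⟩
      rw [hΦT2, one_smul]
    · have h2 : (⅟(2:k') : k') • ((C b : LaurentPolynomial (k' ⊗[k] A)) + C b) = C b := by
        rw [← two_smul k' (C b : LaurentPolynomial (k' ⊗[k] A)), smul_smul, invOf_mul_self,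
          one_smul]
      have : (C b : LaurentPolynomial (k' ⊗[k] A)) = ⅟(2:k') • C (b + η b) := by
        rw [hb, map_add, h2]
      rw [this]
      exact Subalgebra.smul_mem _ (key1 b) _
    · have h2 : (⅟(2:k') : k') •
          (((C b : LaurentPolynomial (k' ⊗[k] A)) + C b) * T (-1)) = C b * T (-1) := by
        rw [← smul_mul_assoc, ← two_smul k' (C b : LaurentPolynomial (k' ⊗[k] A)), smul_smul,
          invOf_mul_self, one_smul]
      have : (C b * T (-1) : LaurentPolynomial (k' ⊗[k] A)) =
          ⅟(2:k') • (C (b - η b) * T (-1)) := by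
        rw [hb, sub_neg_eq_add, map_add, h2]
      rw [this]
      exact Subalgebra.smul_mem _ (key2 b) _
  -- injectivity
  have hginj : Function.Injective g := by
    let ι : ↥(contraction k A θ) →ₗ[k] LaurentPolynomial A :=
      (contraction k A θ).val.toLinearMap
    have hι : Function.Injective ι := Subtype.val_injective
    let F : (k' ⊗[k] LaurentPolynomial A) ≃ₗ[k] LaurentPolynomial (k' ⊗[k] A) :=
      (TensorProduct.congr (LinearEquiv.refl k k') (AddMonoidAlgebra.coeffLinearEquiv k)).trans
        ((TensorProduct.finsuppRight k k k' A ℤ).trans (AddMonoidAlgebra.coeffLinearEquiv k).symm)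
    have key : ∀ (c : k') (p : LaurentPolynomial A),
        F (c ⊗ₜ[k] p) = c • Φ p := by
      intro c p
      let L1 : LaurentPolynomial A →ₗ[k] LaurentPolynomial (k' ⊗[k] A) :=
        F.toLinearMap ∘ₗ (TensorProduct.mk k k' (LaurentPolynomial A) c)
      let L2 : LaurentPolynomial A →ₗ[k] LaurentPolynomial (k' ⊗[k] A) :=
        ((c • LinearMap.id : LaurentPolynomial (k' ⊗[k] A) →ₗ[k] LaurentPolynomial (k' ⊗[k] A))).comp
          Φ.toLinearMap
      have : L1 = L2 := by
        apply AddMonoidAlgebra.lhom_ext'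
        intro n
        apply LinearMap.ext
        intro a
        show F (c ⊗ₜ[k] (AddMonoidAlgebra.single n a : LaurentPolynomial A)) =
          c • Φ (AddMonoidAlgebra.single n a : LaurentPolynomial A)
        have hF : F (c ⊗ₜ[k] (AddMonoidAlgebra.single n a : LaurentPolynomial A)) =
            AddMonoidAlgebra.single n (c ⊗ₜ[k] a) := by
          simp [F, -single_eq_C_mul_T, AddMonoidAlgebra.ofCoeff_single]
        rw [hF]
        rw [single_eq_C_mul_T a n, hΦ, ← smul_mul_assoc, hCs, TensorProduct.smul_tmul',
          smul_eq_mul, mul_one, ← single_eq_C_mul_T]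
      exact LinearMap.congr_fun this p
    have hcomp : ∀ z : k' ⊗[k] ↥(contraction k A θ),
        F ((LinearMap.lTensor k' ι) z) = g z := by
      intro z
      induction z using TensorProduct.induction_on with
      | zero => simp
      | tmul c x =>
          rw [hg]
          exact key c (x : LaurentPolynomial A)
      | add x y hx hy => simp [map_add, hx, hy]
    intro z1 z2 hz
    have h1 : F ((LinearMap.lTensor k' ι) z1) = F ((LinearMap.lTensor k' ι) z2) := by
      rw [hcomp, hcomp, hz]
    exact Module.Flat.lTensor_preserves_injective_linearMap ι hι (F.injective h1)
  -- range = 𝐁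
  have hrange : g.range = contraction k' (k' ⊗[k] A) η := by
    refine le_antisymm ?_ hsurj
    rintro y ⟨z, rfl⟩
    induction z using TensorProduct.induction_on with
    | zero => simpa using Subalgebra.zero_mem _
    | tmul c x =>
        have h' : g (c ⊗ₜ[k] x) ∈ contraction k' (k' ⊗[k] A) η := by
          rw [hg]
          exact Subalgebra.smul_mem _ (hmem _ x.2) _
        exact h'
    | add x y hx hy =>
        rw [map_add]
        exact Subalgebra.add_mem _ hx hy
  refine ⟨(AlgEquiv.ofInjective g hginj).trans
    (Subalgebra.equivOfEq _ _ hrange), ?_⟩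
  intro x hx
  apply Subtype.ext
  show g ((1:k') ⊗ₜ[k] x) = Φ (x : LaurentPolynomial A)
  rw [hg, one_smul]
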